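/- arXiv:math/0502342 — 3 statements merged into one kernel-verified Lean document; each statement's English description precedes it below -/
import Mathlib

section
/- Along any solution of the error system ė_pⁱ = e_vⁱ, mᵢė_vⁱ = uⁱ with control law uⁱ = −Σ_{j∈Nᵢ} w_{ij}(e_vⁱ − e_vʲ) − Σ_{j∈Nᵢ} ∇_{e_pⁱ}Ṽ^{ij} − mᵢe_vⁱ, the energy function J = (1/2)Σ_{i=1}^N (Ṽⁱ + mᵢ e_vⁱᵀe_vⁱ), where Ṽⁱ = Σ_{j∈Nᵢ} Ṽ^{ij}, satisfies J̇ = −e_vᵀ(L⊗Iₙ)e_v − e_vᵀ(M⊗Iₙ)e_v ≤ 0, where e_v = (e_v¹ᵀ, …, e_vᴺᵀ)ᵀ, M = diag(m₁, …, m_N), and L = [l_{ij}] is the matrix with l_{ij} = −w_{ij} for i ≠ j and l_{ii} = Σ_{k≠i} w_{ik}. Moreover J̇ = 0 only if e_v¹ = e_v² = ⋯ = e_vᴺ = 0. -/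
open Filter Topology Matrix
open scoped Kronecker RealInnerProductSpace

section helpers
variable {E : Type*} [NormedAddCommGroup E] [InnerProductSpace ℝ E] [CompleteSpace E]

private lemma grad_comp' (f : E → ℝ) (hf : Differentiable ℝ f) (p q : ℝ → E) (v w : E) (t : ℝ)
    (hp : HasDerivAt p v t) (hq : HasDerivAt q w t) :
    HasDerivAt (fun s => f (p s - q s)) ⟪gradient f (p t - q t), v - w⟫ t := by
  have h1 := (hf (p t - q t)).hasGradientAt.hasFDerivAt
  have h2 := h1.comp_hasDerivAt t (hp.sub hq)
  simpa [InnerProductSpace.toDual_apply_apply, Function.comp_def] using h2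

private lemma grad_odd' (f : E → ℝ) (hf : Differentiable ℝ f) (heven : ∀ z, f (-z) = f z)
    (z : E) : gradient f (-z) = - gradient f z := by
  have h1 := (hf z).hasGradientAt.hasFDerivAt
  have hneg : HasFDerivAt (fun x : E => -x) (-(ContinuousLinearMap.id ℝ E)) (-z) :=
    (hasFDerivAt_id (-z)).neg
  have h1' : HasFDerivAt f (InnerProductSpace.toDual ℝ E (gradient f z)) (- -z) := by
    rw [neg_neg]; exact h1
  have h2 : HasFDerivAt (fun x : E => f (-x))
      ((InnerProductSpace.toDual ℝ E (gradient f z)).comp (-(ContinuousLinearMap.id ℝ E))) (-z) := by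
    simpa [Function.comp_def] using h1'.comp (-z) hneg
  have hfe : (fun x : E => f (-x)) = f := funext heven
  rw [hfe] at h2
  have h3 : ((InnerProductSpace.toDual ℝ E (gradient f z)).comp (-(ContinuousLinearMap.id ℝ E)))
      = InnerProductSpace.toDual ℝ E (-(gradient f z)) := by
    ext v
    simp [InnerProductSpace.toDual_apply_apply, inner_neg_left, inner_neg_right]
  rw [h3] at h2
  exact ((hasGradientAt_iff_hasFDerivAt).2 h2).gradient

private lemma quad_form' (N n : ℕ) (A : Matrix (Fin N) (Fin N) ℝ) (x : Fin N × Fin n → ℝ) :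
    x ⬝ᵥ (A ⊗ₖ (1 : Matrix (Fin n) (Fin n) ℝ)).mulVec x
      = ∑ i, ∑ j, A i j * ∑ k, x (i,k) * x (j,k) := by
  simp only [dotProduct, mulVec, Fintype.sum_prod_type, kroneckerMap_apply, Matrix.one_apply,
    mul_ite, mul_one, mul_zero, Finset.mul_sum, Finset.sum_mul]
  simp only [mul_ite, ite_mul, mul_zero, zero_mul, Finset.sum_ite_eq, Finset.mem_univ, if_true]
  refine Finset.sum_congr rfl fun i _ => ?_
  rw [Finset.sum_comm]
  exact Finset.sum_congr rfl fun j _ => Finset.sum_congr rfl fun k _ => by ring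

end helpers

/-- **Theorem 2 (energy decay).** Along any solution of the error system
`ė_pⁱ = e_vⁱ`, `mᵢė_vⁱ = uⁱ` with control law
`uⁱ = -Σ_{j∈Nᵢ} w_{ij}(e_vⁱ - e_vʲ) - Σ_{j∈Nᵢ} ∇_{e_pⁱ}Ṽ^{ij} - mᵢe_vⁱ`,
the energy `J = ½Σᵢ(Ṽⁱ + mᵢ e_vⁱᵀe_vⁱ)` satisfies
`J̇ = -e_vᵀ(L⊗Iₙ)e_v - e_vᵀ(M⊗Iₙ)e_v ≤ 0`, and `J̇ = 0` only if all `e_vⁱ = 0`. -/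
theorem energy_derivative_momentum_regulation
    (N n : ℕ)
    (m : Fin N → ℝ) (hm : ∀ i, 0 < m i)
    (G : SimpleGraph (Fin N)) [DecidableRel G.Adj] (hG : G.Connected)
    (w : Fin N → Fin N → ℝ)
    (hw_symm : ∀ i j, w i j = w j i)
    (hw_nonneg : ∀ i j, 0 ≤ w i j)
    (hw_diag : ∀ i, w i i = 0)
    (hw_adj : ∀ i j, 0 < w i j ↔ G.Adj i j)
    -- the potential `Ṽ^{ij}`, viewed as a function of the relative position
    -- vector `e_pⁱ - e_pʲ`
    (V : Fin N → Fin N → EuclideanSpace ℝ (Fin n) → ℝ)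
    (hV_symm : ∀ i j, V i j = V j i)
    (hV_rad : ∀ i j (z z' : EuclideanSpace ℝ (Fin n)), ‖z‖ = ‖z'‖ → V i j z = V i j z')
    (hV_diff : ∀ i j, G.Adj i j → Differentiable ℝ (V i j))
    (hV_nonneg : ∀ i j z, 0 ≤ V i j z)
    (ep ev u : Fin N → ℝ → EuclideanSpace ℝ (Fin n))
    (hu : ∀ i t, u i t =
      -(∑ j ∈ G.neighborFinset i, w i j • (ev i t - ev j t))
      - (∑ j ∈ G.neighborFinset i, gradient (V i j) (ep i t - ep j t))
      - m i • ev i t)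
    (hep : ∀ i t, HasDerivAt (ep i) (ev i t) t)
    (hev : ∀ i t, HasDerivAt (ev i) ((m i)⁻¹ • u i t) t)
    (L : Matrix (Fin N) (Fin N) ℝ)
    (hL : ∀ i j, L i j = if i = j then ∑ k ∈ Finset.univ.erase i, w i k else -w i j)
    (J : ℝ → ℝ)
    (hJ : ∀ t, J t = (1 / 2) * ∑ i,
      ((∑ j ∈ G.neighborFinset i, V i j (ep i t - ep j t)) + m i * ⟪ev i t, ev i t⟫))
    -- the stacked vector `e_v(t) ∈ ℝ^{Nn}`
    (e : ℝ → Fin N × Fin n → ℝ)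
    (he : ∀ t p, e t p = ev p.1 t p.2) :
    ∀ t : ℝ,
      HasDerivAt J
        (-(e t ⬝ᵥ (L ⊗ₖ (1 : Matrix (Fin n) (Fin n) ℝ)).mulVec (e t))
          - e t ⬝ᵥ (Matrix.diagonal m ⊗ₖ (1 : Matrix (Fin n) (Fin n) ℝ)).mulVec (e t)) t ∧
      (-(e t ⬝ᵥ (L ⊗ₖ (1 : Matrix (Fin n) (Fin n) ℝ)).mulVec (e t))
          - e t ⬝ᵥ (Matrix.diagonal m ⊗ₖ (1 : Matrix (Fin n) (Fin n) ℝ)).mulVec (e t) ≤ 0) ∧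
      ((-(e t ⬝ᵥ (L ⊗ₖ (1 : Matrix (Fin n) (Fin n) ℝ)).mulVec (e t))
          - e t ⬝ᵥ (Matrix.diagonal m ⊗ₖ (1 : Matrix (Fin n) (Fin n) ℝ)).mulVec (e t) = 0) →
        ∀ i, ev i t = 0) := by
  classical
  intro t
  have hw0 : ∀ i j, ¬ G.Adj i j → w i j = 0 := fun i j h =>
    le_antisymm (not_lt.1 fun hpos => h ((hw_adj i j).1 hpos)) (hw_nonneg i j)
  have het : e t = fun p : Fin N × Fin n => ev p.1 t p.2 := funext fun p => he t p
  -- abbreviations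
  set g : Fin N → Fin N → EuclideanSpace ℝ (Fin n) :=
    fun i j => gradient (V i j) (ep i t - ep j t) with hg
  set Qw : ℝ := ∑ i, ∑ j, w i j * ⟪ev i t, ev i t - ev j t⟫ with hQw
  set Qm : ℝ := ∑ i, m i * ⟪ev i t, ev i t⟫ with hQm
  -- the inner products as coordinate sums
  have hinner_sum : ∀ i j : Fin N, (∑ k, ev i t k * ev j t k) = ⟪ev i t, ev j t⟫ := by
    intro i j
    simp [PiLp.inner_apply, RCLike.inner_apply, conj_trivial]
    exact Finset.sum_congr rfl fun _ _ => mul_comm _ _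
  -- quadratic form with L
  have hQL : e t ⬝ᵥ (L ⊗ₖ (1 : Matrix (Fin n) (Fin n) ℝ)).mulVec (e t) = Qw := by
    rw [het, quad_form']
    rw [hQw]
    refine Finset.sum_congr rfl fun i _ => ?_
    have herase : ∀ (f : Fin N → ℝ), (∑ j, f j) = f i + ∑ j ∈ Finset.univ.erase i, f j := by
      intro f
      rw [← Finset.add_sum_erase _ f (Finset.mem_univ i)]
    rw [herase (fun j => L i j * ∑ k, ev i t k * ev j t k),
        herase (fun j => w i j * ⟪ev i t, ev i t - ev j t⟫)]
    rw [hw_diag, zero_mul, zero_add]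
    rw [hL i i, if_pos rfl, Finset.sum_mul]
    rw [← Finset.sum_add_distrib]
    refine Finset.sum_congr rfl fun j hj => ?_
    have hji : j ≠ i := Finset.ne_of_mem_erase hj
    rw [hL i j, if_neg (Ne.symm hji), hinner_sum, hinner_sum, inner_sub_right]
    ring
  -- quadratic form with M
  have hQM : e t ⬝ᵥ (Matrix.diagonal m ⊗ₖ (1 : Matrix (Fin n) (Fin n) ℝ)).mulVec (e t) = Qm := by
    rw [het, quad_form']
    rw [hQm]
    refine Finset.sum_congr rfl fun i _ => ?_
    simp only [Matrix.diagonal_apply, ite_mul, zero_mul, Finset.sum_ite_eq, Finset.mem_univ,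
      if_true, hinner_sum]
  -- derivative of J
  have hm0 : ∀ i, m i ≠ 0 := fun i => (hm i).ne'
  have hadj_of_mem : ∀ {i j : Fin N}, j ∈ G.neighborFinset i → G.Adj i j := by
    intro i j hj; exact (SimpleGraph.mem_neighborFinset G i j).1 hj
  have hVd : ∀ i : Fin N, HasDerivAt
      (fun s => ∑ j ∈ G.neighborFinset i, V i j (ep i s - ep j s))
      (∑ j ∈ G.neighborFinset i, ⟪g i j, ev i t - ev j t⟫) t := by
    intro i
    exact HasDerivAt.fun_sum fun j hj =>
      grad_comp' (V i j) (hV_diff i j (hadj_of_mem hj)) (ep i) (ep j) _ _ t (hep i t) (hep j t)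
  have hId : ∀ i : Fin N, HasDerivAt (fun s => m i * ⟪ev i s, ev i s⟫)
      (m i * (⟪ev i t, (m i)⁻¹ • u i t⟫ + ⟪(m i)⁻¹ • u i t, ev i t⟫)) t := by
    intro i
    exact ((hev i t).inner ℝ (hev i t)).const_mul (m i)
  have hJfun : J = fun s => (1 / 2) * ∑ i,
      ((∑ j ∈ G.neighborFinset i, V i j (ep i s - ep j s)) + m i * ⟪ev i s, ev i s⟫) :=
    funext hJ
  have hderiv : HasDerivAt J ((1 / 2) * ∑ i,
      ((∑ j ∈ G.neighborFinset i, ⟪g i j, ev i t - ev j t⟫)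
        + m i * (⟪ev i t, (m i)⁻¹ • u i t⟫ + ⟪(m i)⁻¹ • u i t, ev i t⟫))) t := by
    rw [hJfun]
    exact (HasDerivAt.fun_sum fun i _ => (hVd i).add (hId i)).const_mul (1/2)
  -- compute the derivative value
  -- S1:
  set S1 : ℝ := ∑ i, ∑ j ∈ G.neighborFinset i, ⟪g i j, ev i t⟫ with hS1
  -- neighbor-sum swap
  have hns : ∀ (F : Fin N → Fin N → ℝ),
      ∑ i, ∑ j ∈ G.neighborFinset i, F i j = ∑ i, ∑ j ∈ G.neighborFinset i, F j i := by
    intro F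
    have h1 : ∀ (F' : Fin N → Fin N → ℝ) (i : Fin N),
        ∑ j ∈ G.neighborFinset i, F' i j = ∑ j, if G.Adj i j then F' i j else 0 := by
      intro F' i
      rw [SimpleGraph.neighborFinset_eq_filter, Finset.sum_filter]
    calc ∑ i, ∑ j ∈ G.neighborFinset i, F i j
        = ∑ i, ∑ j, if G.Adj i j then F i j else 0 :=
          Finset.sum_congr rfl fun i _ => h1 F i
      _ = ∑ j, ∑ i, if G.Adj i j then F i j else 0 := Finset.sum_comm
      _ = ∑ j, ∑ i, if G.Adj j i then F i j else 0 := by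
          exact Finset.sum_congr rfl fun j _ => Finset.sum_congr rfl fun i _ =>
            if_congr (G.adj_comm i j) rfl rfl
      _ = ∑ j, ∑ i ∈ G.neighborFinset j, F i j :=
          Finset.sum_congr rfl fun j _ => (h1 (fun a b => F b a) j).symm
  -- gradient antisymmetry
  have hgsym : ∀ i j, G.Adj i j → g j i = - g i j := by
    intro i j hadj
    have heven : ∀ z, V i j (-z) = V i j z := fun z => hV_rad i j (-z) z (norm_neg z)
    have hz : ep j t - ep i t = -(ep i t - ep j t) := (neg_sub _ _).symm
    show gradient (V j i) (ep j t - ep i t) = -(gradient (V i j) (ep i t - ep j t))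
    rw [← hV_symm i j, hz, grad_odd' (V i j) (hV_diff i j hadj) heven]
  -- the V-derivative sum equals 2 * S1
  have hVsum : (∑ i, ∑ j ∈ G.neighborFinset i, ⟪g i j, ev i t - ev j t⟫) = 2 * S1 := by
    have hsplit : (∑ i, ∑ j ∈ G.neighborFinset i, ⟪g i j, ev i t - ev j t⟫)
        = S1 - ∑ i, ∑ j ∈ G.neighborFinset i, ⟪g i j, ev j t⟫ := by
      rw [hS1, ← Finset.sum_sub_distrib]
      refine Finset.sum_congr rfl fun i _ => ?_
      rw [← Finset.sum_sub_distrib]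
      exact Finset.sum_congr rfl fun j _ => inner_sub_right _ _ _
    have hswap : (∑ i, ∑ j ∈ G.neighborFinset i, ⟪g i j, ev j t⟫) = -S1 := by
      rw [hns (fun i j => ⟪g i j, ev j t⟫), hS1, ← Finset.sum_neg_distrib]
      refine Finset.sum_congr rfl fun i _ => ?_
      rw [← Finset.sum_neg_distrib]
      refine Finset.sum_congr rfl fun j hj => ?_
      rw [hgsym i j (hadj_of_mem hj), inner_neg_left]
    rw [hsplit, hswap]; ring
  -- neighbor sums with w extend to full sums
  have hwfull : ∀ i, (∑ j ∈ G.neighborFinset i, w i j * ⟪ev i t, ev i t - ev j t⟫)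
      = ∑ j, w i j * ⟪ev i t, ev i t - ev j t⟫ := by
    intro i
    refine Finset.sum_subset (Finset.subset_univ _) fun j _ hj => ?_
    rw [hw0 i j (fun h => hj ((SimpleGraph.mem_neighborFinset G i j).2 h)), zero_mul]
  -- value of ⟪ev i, u i⟫
  have hip_u : ∀ i, ⟪ev i t, u i t⟫
      = -(∑ j, w i j * ⟪ev i t, ev i t - ev j t⟫)
        - (∑ j ∈ G.neighborFinset i, ⟪g i j, ev i t⟫) - m i * ⟪ev i t, ev i t⟫ := by
    intro i
    rw [hu i t, ← hwfull i]
    simp only [inner_sub_right, inner_neg_right, inner_sum, real_inner_smul_right]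
    rw [show (∑ j ∈ G.neighborFinset i, (⟪ev i t, g i j⟫ : ℝ))
        = ∑ j ∈ G.neighborFinset i, ⟪g i j, ev i t⟫ from
      Finset.sum_congr rfl fun j _ => real_inner_comm _ _]
  -- the full derivative value
  have hDval : ((1 : ℝ) / 2) * (∑ i,
      ((∑ j ∈ G.neighborFinset i, ⟪g i j, ev i t - ev j t⟫)
        + m i * (⟪ev i t, (m i)⁻¹ • u i t⟫ + ⟪(m i)⁻¹ • u i t, ev i t⟫)))
      = -Qw - Qm := by
    have hmi : ∀ i, m i * (⟪ev i t, (m i)⁻¹ • u i t⟫ + ⟪(m i)⁻¹ • u i t, ev i t⟫)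
        = 2 * ⟪ev i t, u i t⟫ := by
      intro i
      rw [real_inner_smul_right, real_inner_smul_left, real_inner_comm (u i t)]
      field_simp [hm0 i]
      ring
    rw [Finset.sum_add_distrib, hVsum]
    have h2 : (∑ i, m i * (⟪ev i t, (m i)⁻¹ • u i t⟫ + ⟪(m i)⁻¹ • u i t, ev i t⟫))
        = -(2 * Qw) - 2 * S1 - 2 * Qm := by
      calc (∑ i, m i * (⟪ev i t, (m i)⁻¹ • u i t⟫ + ⟪(m i)⁻¹ • u i t, ev i t⟫))
          = ∑ i, 2 * ⟪ev i t, u i t⟫ := Finset.sum_congr rfl fun i _ => hmi i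
        _ = ∑ i, (2 * (-(∑ j, w i j * ⟪ev i t, ev i t - ev j t⟫)
              - (∑ j ∈ G.neighborFinset i, ⟪g i j, ev i t⟫) - m i * ⟪ev i t, ev i t⟫)) :=
            Finset.sum_congr rfl fun i _ => by rw [hip_u i]
        _ = -(2 * Qw) - 2 * S1 - 2 * Qm := by
            rw [hQw, hQm, hS1]
            simp only [mul_sub, mul_neg]
            rw [Finset.sum_sub_distrib, Finset.sum_sub_distrib, Finset.sum_neg_distrib]
            rw [Finset.mul_sum, Finset.mul_sum, Finset.mul_sum]
    rw [h2]; ring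
  -- nonnegativity of Qw
  have hQw_nonneg : 0 ≤ Qw := by
    have h2Q : Qw + Qw = ∑ i, ∑ j, w i j * ⟪ev i t - ev j t, ev i t - ev j t⟫ := by
      have hswap : Qw = ∑ i, ∑ j, w j i * ⟪ev j t, ev j t - ev i t⟫ := by
        rw [hQw]; exact Finset.sum_comm
      nth_rewrite 2 [hswap]
      nth_rewrite 1 [hQw]
      rw [← Finset.sum_add_distrib]
      refine Finset.sum_congr rfl fun i _ => ?_
      rw [← Finset.sum_add_distrib]
      refine Finset.sum_congr rfl fun j _ => ?_
      rw [← hw_symm i j, inner_sub_left]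
      have e1 : (⟪ev j t, ev j t - ev i t⟫ : ℝ) = -⟪ev j t, ev i t - ev j t⟫ := by
        rw [← inner_neg_right, neg_sub]
      rw [e1]; ring
    have hterm : 0 ≤ ∑ i, ∑ j, w i j * (⟪ev i t - ev j t, ev i t - ev j t⟫ : ℝ) :=
      Finset.sum_nonneg fun i _ => Finset.sum_nonneg fun j _ =>
        mul_nonneg (hw_nonneg i j) real_inner_self_nonneg
    rw [← h2Q] at hterm
    linarith
  have hQm_nonneg : 0 ≤ Qm := by
    rw [hQm]
    exact Finset.sum_nonneg fun i _ => mul_nonneg (hm i).le real_inner_self_nonneg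
  refine ⟨?_, ?_, ?_⟩
  · rw [hQL, hQM]
    exact hDval ▸ hderiv
  · rw [hQL, hQM]; linarith
  · rw [hQL, hQM]
    intro h0 i
    have hQm0 : Qm = 0 := by linarith
    rw [hQm] at hQm0
    have hterm0 := (Finset.sum_eq_zero_iff_of_nonneg
      (fun i _ => mul_nonneg (hm i).le real_inner_self_nonneg)).1 hQm0 i (Finset.mem_univ i)
    have h2 : (⟪ev i t, ev i t⟫ : ℝ) = 0 := by
      rcases mul_eq_zero.1 hterm0 with h | h
      · exact absurd h (hm0 i)
      · exact h
    exact inner_self_eq_zero.1 h2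
end

section
/- Along any solution of the error system ė_pⁱ = e_vⁱ, mᵢė_vⁱ = uⁱ with the control law uⁱ = −Σ_{j∈Nᵢ} w_{ij}(e_vⁱ − e_vʲ) − Σ_{j∈Nᵢ} ∇_{e_pⁱ}Ṽ^{ij} − e_vⁱ (direct velocity regulation instead of momentum regulation), the energy function J = (1/2)Σ_{i=1}^N (Ṽⁱ + mᵢ e_vⁱᵀe_vⁱ) satisfies J̇ = −e_vᵀ(L⊗Iₙ)e_v − e_vᵀe_v ≤ 0, and J̇ = 0 only if e_v¹ = ⋯ = e_vᴺ = 0. -/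
open Filter Topology Matrix
open scoped Kronecker RealInnerProductSpace

lemma gradient_neg_of_even {F : Type*} [NormedAddCommGroup F] [InnerProductSpace ℝ F]
    [CompleteSpace F] (f : F → ℝ) (hf : Differentiable ℝ f) (h : ∀ z, f (-z) = f z) (x : F) :
    gradient f (-x) = - gradient f x := by
  have hneg : HasFDerivAt (fun z : F => -z) (-(ContinuousLinearMap.id ℝ F)) (-x) :=
    (hasFDerivAt_id (-x)).neg
  have h2 : HasFDerivAt (fun z : F => f (-z))
      ((fderiv ℝ f x).comp (-(ContinuousLinearMap.id ℝ F))) (-x) := by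
    have hx : HasFDerivAt f (fderiv ℝ f x) (-(-x) : F) := by
      rw [neg_neg]; exact (hf x).hasFDerivAt
    exact hx.comp (-x) hneg
  have h3 : HasFDerivAt f (-(fderiv ℝ f x)) (-x) := by
    have hfun : (fun z : F => f (-z)) = f := funext h
    rw [hfun] at h2
    convert h2 using 1
    ext v
    simp
  have h4 : fderiv ℝ f (-x) = -(fderiv ℝ f x) := h3.fderiv
  unfold gradient
  rw [h4, map_neg]

/-- **Theorem 2 (energy decay).** Along any solution of the error system
`ė_pⁱ = e_vⁱ`, `mᵢė_vⁱ = uⁱ` with control law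
`uⁱ = -Σ_{j∈Nᵢ} w_{ij}(e_vⁱ - e_vʲ) - Σ_{j∈Nᵢ} ∇_{e_pⁱ}Ṽ^{ij} - e_vⁱ`
(direct velocity regulation), the energy `J = ½Σᵢ(Ṽⁱ + mᵢ e_vⁱᵀe_vⁱ)` satisfies
`J̇ = -e_vᵀ(L⊗Iₙ)e_v - e_vᵀe_v ≤ 0`, and `J̇ = 0` only if all `e_vⁱ = 0`. -/
theorem energy_derivative_velocity_regulation
    (N n : ℕ)
    (m : Fin N → ℝ) (hm : ∀ i, 0 < m i)
    (G : SimpleGraph (Fin N)) [DecidableRel G.Adj] (hG : G.Connected)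
    (w : Fin N → Fin N → ℝ)
    (hw_symm : ∀ i j, w i j = w j i)
    (hw_nonneg : ∀ i j, 0 ≤ w i j)
    (hw_diag : ∀ i, w i i = 0)
    (hw_adj : ∀ i j, 0 < w i j ↔ G.Adj i j)
    -- the potential `Ṽ^{ij}`, viewed as a function of the relative position
    -- vector `e_pⁱ - e_pʲ`
    (V : Fin N → Fin N → EuclideanSpace ℝ (Fin n) → ℝ)
    (hV_symm : ∀ i j, V i j = V j i)
    (hV_rad : ∀ i j (z z' : EuclideanSpace ℝ (Fin n)), ‖z‖ = ‖z'‖ → V i j z = V i j z')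
    (hV_diff : ∀ i j, G.Adj i j → Differentiable ℝ (V i j))
    (hV_nonneg : ∀ i j z, 0 ≤ V i j z)
    (ep ev u : Fin N → ℝ → EuclideanSpace ℝ (Fin n))
    (hu : ∀ i t, u i t =
      -(∑ j ∈ G.neighborFinset i, w i j • (ev i t - ev j t))
      - (∑ j ∈ G.neighborFinset i, gradient (V i j) (ep i t - ep j t))
      - ev i t)
    (hep : ∀ i t, HasDerivAt (ep i) (ev i t) t)
    (hev : ∀ i t, HasDerivAt (ev i) ((m i)⁻¹ • u i t) t)
    (L : Matrix (Fin N) (Fin N) ℝ)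
    (hL : ∀ i j, L i j = if i = j then ∑ k ∈ Finset.univ.erase i, w i k else -w i j)
    (J : ℝ → ℝ)
    (hJ : ∀ t, J t = (1 / 2) * ∑ i,
      ((∑ j ∈ G.neighborFinset i, V i j (ep i t - ep j t)) + m i * ⟪ev i t, ev i t⟫))
    -- the stacked vector `e_v(t) ∈ ℝ^{Nn}`
    (e : ℝ → Fin N × Fin n → ℝ)
    (he : ∀ t p, e t p = ev p.1 t p.2) :
    ∀ t : ℝ,
      HasDerivAt J
        (-(e t ⬝ᵥ (L ⊗ₖ (1 : Matrix (Fin n) (Fin n) ℝ)).mulVec (e t))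
          - e t ⬝ᵥ e t) t ∧
      (-(e t ⬝ᵥ (L ⊗ₖ (1 : Matrix (Fin n) (Fin n) ℝ)).mulVec (e t))
          - e t ⬝ᵥ e t ≤ 0) ∧
      ((-(e t ⬝ᵥ (L ⊗ₖ (1 : Matrix (Fin n) (Fin n) ℝ)).mulVec (e t))
          - e t ⬝ᵥ e t = 0) →
        ∀ i, ev i t = 0) := by
  classical
  -- `w` vanishes off the edge set
  have hw0 : ∀ i j, ¬ G.Adj i j → w i j = 0 := by
    intro i j h
    rcases (hw_nonneg i j).eq_or_lt with h' | h'
    · exact h'.symm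
    · exact absurd ((hw_adj i j).1 h') h
  intro t
  set vv : Fin N → EuclideanSpace ℝ (Fin n) := fun i => ev i t with hvv
  set g : Fin N → Fin N → EuclideanSpace ℝ (Fin n) :=
    fun i j => gradient (V i j) (ep i t - ep j t) with hgdef
  -- antisymmetry of the interaction gradients
  have gsym : ∀ i j, G.Adj i j → g j i = - g i j := by
    intro i j hadj
    have heven : ∀ z, V i j (-z) = V i j z := fun z => hV_rad i j _ _ (norm_neg z)
    have h1 : g j i = gradient (V i j) (-(ep i t - ep j t)) := by
      simp only [hgdef]
      rw [← hV_symm i j, neg_sub]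
    rw [h1, gradient_neg_of_even (V i j) (hV_diff i j hadj) heven]
  -- the quadratic form of the Kronecker product
  have hQ1 : e t ⬝ᵥ (L ⊗ₖ (1 : Matrix (Fin n) (Fin n) ℝ)).mulVec (e t)
      = ∑ i, ∑ j, L i j * ⟪vv i, vv j⟫ := by
    have hmv : ∀ p : Fin N × Fin n,
        (L ⊗ₖ (1 : Matrix (Fin n) (Fin n) ℝ)).mulVec (e t) p
          = ∑ j, L p.1 j * ev j t p.2 := by
      intro p
      simp [Matrix.mulVec, dotProduct, Fintype.sum_prod_type, Matrix.kroneckerMap_apply,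
        Matrix.one_apply, he, mul_ite, ite_mul, Finset.sum_ite_eq]
    simp only [dotProduct, hmv, Fintype.sum_prod_type, he]
    refine Finset.sum_congr rfl fun i _ => ?_
    simp only [Finset.mul_sum, PiLp.inner_apply, RCLike.inner_apply, conj_trivial]
    rw [Finset.sum_comm]
    refine Finset.sum_congr rfl fun j _ => Finset.sum_congr rfl fun a _ => by ring
  -- the Laplacian quadratic form, rewritten with `w`
  have hQ2 : ∀ x : Fin N → EuclideanSpace ℝ (Fin n),
      (∑ i, ∑ j, L i j * ⟪x i, x j⟫) = ∑ i, ∑ j, w i j * ⟪x i - x j, x i⟫ := by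
    intro x
    refine Finset.sum_congr rfl fun i _ => ?_
    rw [← Finset.sum_erase_add _ _ (Finset.mem_univ i)]
    conv_rhs => rw [← Finset.sum_erase_add _ _ (Finset.mem_univ i)]
    rw [hL i i, if_pos rfl, hw_diag i, zero_mul, add_zero, Finset.sum_mul,
      ← Finset.sum_add_distrib]
    refine Finset.sum_congr rfl fun j hj => ?_
    rw [hL i j, if_neg (Finset.ne_of_mem_erase hj).symm, inner_sub_left,
      real_inner_comm (x j) (x i)]
    ring
  -- symmetrization of the quadratic form
  have hQ3 : ∀ x : Fin N → EuclideanSpace ℝ (Fin n),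
      (∑ i, ∑ j, w i j * ⟪x i - x j, x i⟫) + (∑ i, ∑ j, w i j * ⟪x i - x j, x i⟫)
        = ∑ i, ∑ j, w i j * ⟪x i - x j, x i - x j⟫ := by
    intro x
    have hswap : (∑ i, ∑ j, w i j * ⟪x i - x j, x i⟫)
        = ∑ i, ∑ j, w i j * (- ⟪x i - x j, x j⟫) := by
      rw [Finset.sum_comm]
      refine Finset.sum_congr rfl fun i _ => Finset.sum_congr rfl fun j _ => ?_
      rw [hw_symm j i]
      congr 1
      rw [← inner_neg_left, neg_sub]
    nth_rewrite 1 [hswap]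
    rw [← Finset.sum_add_distrib]
    refine Finset.sum_congr rfl fun i _ => ?_
    rw [← Finset.sum_add_distrib]
    refine Finset.sum_congr rfl fun j _ => ?_
    rw [inner_sub_right]
    ring
  have hQnonneg : 0 ≤ e t ⬝ᵥ (L ⊗ₖ (1 : Matrix (Fin n) (Fin n) ℝ)).mulVec (e t) := by
    rw [hQ1, hQ2]
    have h1 : 0 ≤ ∑ i, ∑ j, w i j * ⟪vv i - vv j, vv i - vv j⟫ :=
      Finset.sum_nonneg fun i _ => Finset.sum_nonneg fun j _ =>
        mul_nonneg (hw_nonneg i j) real_inner_self_nonneg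
    nlinarith [hQ3 vv]
  have hee : e t ⬝ᵥ e t = ∑ i, ⟪vv i, vv i⟫ := by
    simp only [dotProduct, Fintype.sum_prod_type, he, PiLp.inner_apply, RCLike.inner_apply,
      conj_trivial]
    rfl
  have heenonneg : 0 ≤ e t ⬝ᵥ e t := by
    rw [hee]
    exact Finset.sum_nonneg fun i _ => real_inner_self_nonneg
  -- the derivative of the energy
  have hD : HasDerivAt J (1 / 2 * ∑ i,
      ((∑ j ∈ G.neighborFinset i, ⟪g i j, vv i - vv j⟫)
        + m i * (⟪vv i, (m i)⁻¹ • u i t⟫ + ⟪(m i)⁻¹ • u i t, vv i⟫))) t := by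
    have hJfun : J = fun s => (1 / 2) * ∑ i,
        ((∑ j ∈ G.neighborFinset i, V i j (ep i s - ep j s)) + m i * ⟪ev i s, ev i s⟫) :=
      funext hJ
    rw [hJfun]
    refine HasDerivAt.const_mul _ (HasDerivAt.fun_sum fun i _ => HasDerivAt.add ?_
      (HasDerivAt.const_mul _ ?_))
    · refine HasDerivAt.fun_sum fun j hj => ?_
      have hadj : G.Adj i j := by rwa [SimpleGraph.mem_neighborFinset] at hj
      have hc : HasDerivAt (fun s => ep i s - ep j s) (vv i - vv j) t :=
        (hep i t).sub (hep j t)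
      have hgrad : HasGradientAt (V i j) (g i j) (ep i t - ep j t) :=
        (hV_diff i j hadj _).hasGradientAt
      have := hgrad.hasFDerivAt.comp_hasDerivAt t hc
      simpa [InnerProductSpace.toDual_apply_apply, Function.comp_def] using this
    · exact (hev i t).inner ℝ (hev i t)
  -- rewrite the derivative value
  have hkin : ∀ i, m i * (⟪vv i, (m i)⁻¹ • u i t⟫ + ⟪(m i)⁻¹ • u i t, vv i⟫)
      = 2 * ⟪u i t, vv i⟫ := by
    intro i
    have hmne : m i ≠ 0 := ne_of_gt (hm i)
    rw [real_inner_smul_right, real_inner_smul_left, real_inner_comm (vv i) (u i t),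
      ← mul_add, ← mul_assoc, mul_inv_cancel₀ hmne, one_mul, two_mul]
  have hctrl : ∀ i, ⟪u i t, vv i⟫
      = -(∑ j ∈ G.neighborFinset i, w i j * ⟪vv i - vv j, vv i⟫)
        - (∑ j ∈ G.neighborFinset i, ⟪g i j, vv i⟫) - ⟪vv i, vv i⟫ := by
    intro i
    rw [hu i t]
    rw [inner_sub_left, inner_sub_left, inner_neg_left, sum_inner, sum_inner]
    simp only [real_inner_smul_left]
    rfl
  have hpot : (∑ i, ∑ j ∈ G.neighborFinset i, ⟪g i j, vv i - vv j⟫)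
      = 2 * ∑ i, ∑ j ∈ G.neighborFinset i, ⟪g i j, vv i⟫ := by
    have hswap : (∑ i, ∑ j ∈ G.neighborFinset i, ⟪g i j, vv j⟫)
        = ∑ i, ∑ j ∈ G.neighborFinset i, ⟪g j i, vv i⟫ := by
      refine Finset.sum_comm' fun i j => ?_
      simp [SimpleGraph.mem_neighborFinset, G.adj_comm i j]
    have hswap2 : (∑ i, ∑ j ∈ G.neighborFinset i, ⟪g j i, vv i⟫)
        = -∑ i, ∑ j ∈ G.neighborFinset i, ⟪g i j, vv i⟫ := by
      rw [← Finset.sum_neg_distrib]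
      refine Finset.sum_congr rfl fun i _ => ?_
      rw [← Finset.sum_neg_distrib]
      refine Finset.sum_congr rfl fun j hj => ?_
      have hadj : G.Adj i j := by rwa [SimpleGraph.mem_neighborFinset] at hj
      rw [gsym i j hadj, inner_neg_left]
    calc (∑ i, ∑ j ∈ G.neighborFinset i, ⟪g i j, vv i - vv j⟫)
        = (∑ i, ∑ j ∈ G.neighborFinset i, ⟪g i j, vv i⟫)
          - ∑ i, ∑ j ∈ G.neighborFinset i, ⟪g i j, vv j⟫ := by
          rw [← Finset.sum_sub_distrib]
          refine Finset.sum_congr rfl fun i _ => ?_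
          rw [← Finset.sum_sub_distrib]
          exact Finset.sum_congr rfl fun j _ => inner_sub_right _ _ _
      _ = 2 * ∑ i, ∑ j ∈ G.neighborFinset i, ⟪g i j, vv i⟫ := by
          rw [hswap, hswap2]; ring
  -- extend the neighbor sums to all vertices
  have hext : ∀ i, (∑ j ∈ G.neighborFinset i, w i j * ⟪vv i - vv j, vv i⟫)
      = ∑ j, w i j * ⟪vv i - vv j, vv i⟫ := by
    intro i
    refine Finset.sum_subset (Finset.subset_univ _) fun j _ hj => ?_
    rw [hw0 i j (by rwa [SimpleGraph.mem_neighborFinset] at hj), zero_mul]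
  -- value of the derivative
  have hval : (1 / 2 * ∑ i,
      ((∑ j ∈ G.neighborFinset i, ⟪g i j, vv i - vv j⟫)
        + m i * (⟪vv i, (m i)⁻¹ • u i t⟫ + ⟪(m i)⁻¹ • u i t, vv i⟫)))
      = -(e t ⬝ᵥ (L ⊗ₖ (1 : Matrix (Fin n) (Fin n) ℝ)).mulVec (e t)) - e t ⬝ᵥ e t := by
    rw [hQ1, hQ2 vv, hee]
    calc (1 / 2 * ∑ i,
        ((∑ j ∈ G.neighborFinset i, ⟪g i j, vv i - vv j⟫)
          + m i * (⟪vv i, (m i)⁻¹ • u i t⟫ + ⟪(m i)⁻¹ • u i t, vv i⟫)))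
        = 1 / 2 * ((∑ i, ∑ j ∈ G.neighborFinset i, ⟪g i j, vv i - vv j⟫)
            + ∑ i, 2 * ⟪u i t, vv i⟫) := by
          rw [← Finset.sum_add_distrib]
          congr 1
          exact Finset.sum_congr rfl fun i _ => by rw [hkin i]
      _ = (∑ i, ∑ j ∈ G.neighborFinset i, ⟪g i j, vv i⟫) + ∑ i, ⟪u i t, vv i⟫ := by
          rw [hpot, ← Finset.mul_sum]
          ring
      _ = (∑ i, ∑ j ∈ G.neighborFinset i, ⟪g i j, vv i⟫)
          + ∑ i, (-(∑ j ∈ G.neighborFinset i, w i j * ⟪vv i - vv j, vv i⟫)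
            - (∑ j ∈ G.neighborFinset i, ⟪g i j, vv i⟫) - ⟪vv i, vv i⟫) := by
          congr 1
          exact Finset.sum_congr rfl fun i _ => hctrl i
      _ = -(∑ i, ∑ j, w i j * ⟪vv i - vv j, vv i⟫) - ∑ i, ⟪vv i, vv i⟫ := by
          simp only [Finset.sum_sub_distrib, Finset.sum_neg_distrib]
          rw [← Finset.sum_congr rfl fun i (_ : i ∈ Finset.univ) => hext i]
          ring
  refine ⟨hval ▸ hD, by linarith, ?_⟩
  intro h0 i
  have h1 : e t ⬝ᵥ e t = 0 := by linarith
  rw [hee] at h1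
  have h2 : ⟪vv i, vv i⟫ = 0 :=
    (Finset.sum_eq_zero_iff_of_nonneg fun j _ => real_inner_self_nonneg).1 h1 i
      (Finset.mem_univ i)
  exact inner_self_eq_zero.1 h2
end

section
/- Along any solution of the error system ė_pⁱ = e_vⁱ, mᵢė_vⁱ = uⁱ with the control law uⁱ = −Σ_{j∈Nᵢ} w_{ij}(e_vⁱ − e_vʲ) − Σ_{j∈Nᵢ} ∇_{e_pⁱ}Ṽ^{ij} − hᵢmᵢe_vⁱ, where hᵢ ∈ {0,1} indicates whether agent i can detect the reference signal, the energy function J = (1/2)Σ_{i=1}^N (Ṽⁱ + mᵢ e_vⁱᵀe_vⁱ) satisfies J̇ = −e_vᵀ(L⊗Iₙ)e_v − e_vᵀ(M̂⊗Iₙ)e_v ≤ 0, where M̂ = diag(h₁m₁, …, h_Nm_N) is positive semi-definite. -/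
open Filter Topology Matrix
open scoped Kronecker RealInnerProductSpace

private lemma sum_neighbor_swap {N : ℕ} (G : SimpleGraph (Fin N)) [DecidableRel G.Adj]
    (F : Fin N → Fin N → ℝ) :
    ∑ i, ∑ j ∈ G.neighborFinset i, F i j = ∑ i, ∑ j ∈ G.neighborFinset i, F j i := by
  refine Finset.sum_comm' ?_
  intro x y
  simp [SimpleGraph.mem_neighborFinset, SimpleGraph.adj_comm]

private lemma gradient_neg_of_even_s15 {n : ℕ} (f : EuclideanSpace ℝ (Fin n) → ℝ)
    (hd : Differentiable ℝ f) (heven : ∀ z, f (-z) = f z) (x : EuclideanSpace ℝ (Fin n)) :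
    gradient f (-x) = - gradient f x := by
  have h1 : HasFDerivAt f
      (InnerProductSpace.toDual ℝ _ (gradient f x)) (-(-x)) := by
    rw [neg_neg]
    exact (hd x).hasGradientAt.hasFDerivAt
  have hneg : HasFDerivAt (fun z : EuclideanSpace ℝ (Fin n) => -z)
      (-(ContinuousLinearMap.id ℝ (EuclideanSpace ℝ (Fin n)))) (-x) :=
    (hasFDerivAt_id (-x)).neg
  have h2 := h1.comp (-x) hneg
  have hfun : (f ∘ fun z : EuclideanSpace ℝ (Fin n) => -z) = f := funext fun z => heven z
  rw [hfun] at h2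
  have hL : (InnerProductSpace.toDual ℝ (EuclideanSpace ℝ (Fin n)) (gradient f x)).comp
      (-(ContinuousLinearMap.id ℝ (EuclideanSpace ℝ (Fin n))))
      = InnerProductSpace.toDual ℝ _ (-(gradient f x)) := by
    ext z
    simp [InnerProductSpace.toDual_apply_apply, inner_neg_left, inner_neg_right]
  rw [hL] at h2
  exact (hasGradientAt_iff_hasFDerivAt.mpr h2).gradient

/-- **Theorem 2 (energy decay).** Along any solution of the error system
`ė_pⁱ = e_vⁱ`, `mᵢė_vⁱ = uⁱ` with control law
`uⁱ = -Σ_{j∈Nᵢ} w_{ij}(e_vⁱ - e_vʲ) - Σ_{j∈Nᵢ} ∇_{e_pⁱ}Ṽ^{ij} - hᵢmᵢe_vⁱ`,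
where `hᵢ ∈ {0,1}` indicates whether agent `i` detects the reference signal,
the energy `J = ½Σᵢ(Ṽⁱ + mᵢ e_vⁱᵀe_vⁱ)` satisfies
`J̇ = -e_vᵀ(L⊗Iₙ)e_v - e_vᵀ(M̂⊗Iₙ)e_v ≤ 0`, where `M̂ = diag(h₁m₁, …, h_Nm_N)`
is positive semi-definite. -/
theorem energy_derivative_partial_information
    (N n : ℕ)
    (m : Fin N → ℝ) (hm : ∀ i, 0 < m i)
    (G : SimpleGraph (Fin N)) [DecidableRel G.Adj] (hG : G.Connected)
    (w : Fin N → Fin N → ℝ)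
    (hw_symm : ∀ i j, w i j = w j i)
    (hw_nonneg : ∀ i j, 0 ≤ w i j)
    (hw_diag : ∀ i, w i i = 0)
    (hw_adj : ∀ i j, 0 < w i j ↔ G.Adj i j)
    -- the potential `Ṽ^{ij}`, viewed as a function of the relative position
    -- vector `e_pⁱ - e_pʲ`
    (V : Fin N → Fin N → EuclideanSpace ℝ (Fin n) → ℝ)
    (hV_symm : ∀ i j, V i j = V j i)
    (hV_rad : ∀ i j (z z' : EuclideanSpace ℝ (Fin n)), ‖z‖ = ‖z'‖ → V i j z = V i j z')
    (hV_diff : ∀ i j, G.Adj i j → Differentiable ℝ (V i j))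
    (hV_nonneg : ∀ i j z, 0 ≤ V i j z)
    (h : Fin N → ℝ) (hh01 : ∀ i, h i = 0 ∨ h i = 1)
    (ep ev u : Fin N → ℝ → EuclideanSpace ℝ (Fin n))
    (hu : ∀ i t, u i t =
      -(∑ j ∈ G.neighborFinset i, w i j • (ev i t - ev j t))
      - (∑ j ∈ G.neighborFinset i, gradient (V i j) (ep i t - ep j t))
      - (h i * m i) • ev i t)
    (hep : ∀ i t, HasDerivAt (ep i) (ev i t) t)
    (hev : ∀ i t, HasDerivAt (ev i) ((m i)⁻¹ • u i t) t)
    (L : Matrix (Fin N) (Fin N) ℝ)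
    (hL : ∀ i j, L i j = if i = j then ∑ k ∈ Finset.univ.erase i, w i k else -w i j)
    (J : ℝ → ℝ)
    (hJ : ∀ t, J t = (1 / 2) * ∑ i,
      ((∑ j ∈ G.neighborFinset i, V i j (ep i t - ep j t)) + m i * ⟪ev i t, ev i t⟫))
    -- the stacked vector `e_v(t) ∈ ℝ^{Nn}`
    (e : ℝ → Fin N × Fin n → ℝ)
    (he : ∀ t p, e t p = ev p.1 t p.2) :
    ∀ t : ℝ,
      HasDerivAt J
        (-(e t ⬝ᵥ (L ⊗ₖ (1 : Matrix (Fin n) (Fin n) ℝ)).mulVec (e t))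
          - e t ⬝ᵥ (Matrix.diagonal (fun i => h i * m i) ⊗ₖ (1 : Matrix (Fin n) (Fin n) ℝ)).mulVec (e t)) t ∧
      (-(e t ⬝ᵥ (L ⊗ₖ (1 : Matrix (Fin n) (Fin n) ℝ)).mulVec (e t))
          - e t ⬝ᵥ (Matrix.diagonal (fun i => h i * m i) ⊗ₖ (1 : Matrix (Fin n) (Fin n) ℝ)).mulVec (e t) ≤ 0) ∧
      (Matrix.diagonal (fun i => h i * m i)).PosSemidef := by
  intro t
  classical
  have hmne : ∀ i, m i ≠ 0 := fun i => (hm i).ne'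
  have hh_nonneg : ∀ i, 0 ≤ h i := by
    intro i; rcases hh01 i with hx | hx <;> rw [hx] <;> norm_num
  have hw_zero : ∀ i j, ¬ G.Adj i j → w i j = 0 := by
    intro i j hij
    rcases lt_or_eq_of_le (hw_nonneg i j) with hlt | heq
    · exact absurd ((hw_adj i j).mp hlt) hij
    · exact heq.symm
  -- the derivative of J in raw form
  have hJder : HasDerivAt J ((1/2) * ∑ i,
      ((∑ j ∈ G.neighborFinset i,
          ⟪gradient (V i j) (ep i t - ep j t), ev i t - ev j t⟫)
        + m i * (⟪ev i t, (m i)⁻¹ • u i t⟫ + ⟪(m i)⁻¹ • u i t, ev i t⟫))) t := by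
    have hJfun : J = fun s => (1/2) * ∑ i,
        ((∑ j ∈ G.neighborFinset i, V i j (ep i s - ep j s)) + m i * ⟪ev i s, ev i s⟫) :=
      funext hJ
    rw [hJfun]
    refine HasDerivAt.const_mul _ (HasDerivAt.fun_sum fun i _ => HasDerivAt.add ?_ ?_)
    · refine HasDerivAt.fun_sum fun j hj => ?_
      have hadj : G.Adj i j := by rwa [SimpleGraph.mem_neighborFinset] at hj
      have hF : HasFDerivAt (V i j)
          (InnerProductSpace.toDual ℝ _ (gradient (V i j) (ep i t - ep j t)))
          (ep i t - ep j t) :=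
        (hV_diff i j hadj _).hasGradientAt.hasFDerivAt
      simpa [InnerProductSpace.toDual_apply_apply, Function.comp_def, Pi.sub_apply] using
        hF.comp_hasDerivAt t ((hep i t).sub (hep j t))
    · exact (HasDerivAt.inner ℝ (hev i t) (hev i t)).const_mul (m i)
  -- scalar simplification of the kinetic term
  have hB : ∀ i, m i * (⟪ev i t, (m i)⁻¹ • u i t⟫ + ⟪(m i)⁻¹ • u i t, ev i t⟫)
      = 2 * ⟪ev i t, u i t⟫ := by
    intro i
    rw [real_inner_smul_right, real_inner_smul_left, real_inner_comm (u i t)]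
    field_simp
    rw [mul_assoc, mul_div_cancel_left₀ _ (hmne i)]
    ring
  -- expanding the control law inside the inner product
  have hinner_u : ∀ i, ⟪ev i t, u i t⟫
      = -(∑ j ∈ G.neighborFinset i, w i j * ⟪ev i t, ev i t - ev j t⟫)
        - (∑ j ∈ G.neighborFinset i, ⟪ev i t, gradient (V i j) (ep i t - ep j t)⟫)
        - h i * m i * ⟪ev i t, ev i t⟫ := by
    intro i
    rw [hu i t]
    simp only [inner_sub_right, inner_neg_right, inner_sum, real_inner_smul_right]
  -- antisymmetry of the gradient terms
  have hganti : ∀ i j, G.Adj i j →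
      gradient (V j i) (ep j t - ep i t) = - gradient (V i j) (ep i t - ep j t) := by
    intro i j hadj
    rw [hV_symm j i, show ep j t - ep i t = -(ep i t - ep j t) from (neg_sub _ _).symm]
    exact gradient_neg_of_even_s15 (V i j) (hV_diff i j hadj)
      (fun z => hV_rad i j (-z) z (norm_neg z)) _
  -- symmetrization identity
  have hA : ∑ i, ∑ j ∈ G.neighborFinset i,
        ⟪gradient (V i j) (ep i t - ep j t), ev i t - ev j t⟫
      = 2 * ∑ i, ∑ j ∈ G.neighborFinset i,
        ⟪ev i t, gradient (V i j) (ep i t - ep j t)⟫ := by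
    have e1 : ∑ i, ∑ j ∈ G.neighborFinset i,
          ⟪gradient (V i j) (ep i t - ep j t), ev i t - ev j t⟫
        = (∑ i, ∑ j ∈ G.neighborFinset i,
            ⟪gradient (V i j) (ep i t - ep j t), ev i t⟫)
          - ∑ i, ∑ j ∈ G.neighborFinset i,
            ⟪gradient (V i j) (ep i t - ep j t), ev j t⟫ := by
      simp only [inner_sub_right, Finset.sum_sub_distrib]
    have e2 : ∑ i, ∑ j ∈ G.neighborFinset i,
          ⟪gradient (V i j) (ep i t - ep j t), ev i t⟫
        = ∑ i, ∑ j ∈ G.neighborFinset i,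
          ⟪ev i t, gradient (V i j) (ep i t - ep j t)⟫ :=
      Finset.sum_congr rfl fun i _ => Finset.sum_congr rfl fun j _ => real_inner_comm _ _
    have e3 : ∑ i, ∑ j ∈ G.neighborFinset i,
          ⟪gradient (V i j) (ep i t - ep j t), ev j t⟫
        = - ∑ i, ∑ j ∈ G.neighborFinset i,
          ⟪ev i t, gradient (V i j) (ep i t - ep j t)⟫ := by
      rw [sum_neighbor_swap G
        (fun i j => ⟪gradient (V i j) (ep i t - ep j t), ev j t⟫)]
      rw [show -∑ i, ∑ j ∈ G.neighborFinset i,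
            ⟪ev i t, gradient (V i j) (ep i t - ep j t)⟫
          = ∑ i, ∑ j ∈ G.neighborFinset i,
            -⟪ev i t, gradient (V i j) (ep i t - ep j t)⟫ by
        simp [Finset.sum_neg_distrib]]
      refine Finset.sum_congr rfl fun i _ => Finset.sum_congr rfl fun j hj => ?_
      have hadj : G.Adj i j := by rwa [SimpleGraph.mem_neighborFinset] at hj
      rw [hganti i j hadj, inner_neg_left, real_inner_comm]
    rw [e1, e2, e3]
    ring
  -- sum of inner products with the control
  have hC : ∑ i, ⟪ev i t, u i t⟫
      = -(∑ i, ∑ j ∈ G.neighborFinset i, w i j * ⟪ev i t, ev i t - ev j t⟫)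
        - (∑ i, ∑ j ∈ G.neighborFinset i, ⟪ev i t, gradient (V i j) (ep i t - ep j t)⟫)
        - ∑ i, h i * m i * ⟪ev i t, ev i t⟫ := by
    simp only [hinner_u]
    rw [Finset.sum_sub_distrib, Finset.sum_sub_distrib, Finset.sum_neg_distrib]
  -- the derivative value in closed form
  have hval : (1/2) * ∑ i,
      ((∑ j ∈ G.neighborFinset i,
          ⟪gradient (V i j) (ep i t - ep j t), ev i t - ev j t⟫)
        + m i * (⟪ev i t, (m i)⁻¹ • u i t⟫ + ⟪(m i)⁻¹ • u i t, ev i t⟫))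
      = -(∑ i, ∑ j ∈ G.neighborFinset i, w i j * ⟪ev i t, ev i t - ev j t⟫)
        - ∑ i, h i * m i * ⟪ev i t, ev i t⟫ := by
    simp only [hB]
    rw [Finset.sum_add_distrib, hA, ← Finset.mul_sum, hC]
    ring
  -- the quadratic form of the Laplacian
  have hT1 : e t ⬝ᵥ (L ⊗ₖ (1 : Matrix (Fin n) (Fin n) ℝ)).mulVec (e t)
      = ∑ i, ∑ j, L i j * ⟪ev i t, ev j t⟫ := by
    simp only [dotProduct, Matrix.mulVec, Matrix.kroneckerMap_apply, Matrix.one_apply,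
      Fintype.sum_prod_type, he, PiLp.inner_apply, RCLike.inner_apply, conj_trivial,
      mul_ite, mul_one, mul_zero, ite_mul, zero_mul, Finset.sum_ite_eq, Finset.mem_univ,
      if_true]
    simp only [Finset.mul_sum]
    refine Finset.sum_congr rfl fun i _ => ?_
    rw [Finset.sum_comm]
    exact Finset.sum_congr rfl fun j _ => Finset.sum_congr rfl fun a _ => by ring
  have hT2 : e t ⬝ᵥ (Matrix.diagonal (fun i => h i * m i) ⊗ₖ (1 : Matrix (Fin n) (Fin n) ℝ)).mulVec (e t)
      = ∑ i, h i * m i * ⟪ev i t, ev i t⟫ := by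
    simp only [dotProduct, Matrix.mulVec, Matrix.kroneckerMap_apply, Matrix.one_apply,
      Matrix.diagonal_apply, Fintype.sum_prod_type, he, PiLp.inner_apply, RCLike.inner_apply,
      conj_trivial, mul_ite, mul_one, mul_zero, ite_mul, zero_mul, Finset.sum_ite_eq,
      Finset.mem_univ, if_true]
    simp only [Finset.mul_sum]
    refine Finset.sum_congr rfl fun i _ => ?_
    exact Finset.sum_congr rfl fun a _ => by ring
  -- the Laplacian quadratic form in terms of the weights
  have hLsum : (∑ i, ∑ j, L i j * ⟪ev i t, ev j t⟫)
      = ∑ i, ∑ j ∈ G.neighborFinset i, w i j * ⟪ev i t, ev i t - ev j t⟫ := by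
    refine Finset.sum_congr rfl fun i _ => ?_
    rw [← Finset.add_sum_erase _ _ (Finset.mem_univ i)]
    have hdiag : L i i * ⟪ev i t, ev i t⟫
        = ∑ j ∈ Finset.univ.erase i, w i j * ⟪ev i t, ev i t⟫ := by
      rw [hL i i, if_pos rfl, Finset.sum_mul]
    have hoff : ∑ j ∈ Finset.univ.erase i, L i j * ⟪ev i t, ev j t⟫
        = ∑ j ∈ Finset.univ.erase i, -(w i j * ⟪ev i t, ev j t⟫) := by
      refine Finset.sum_congr rfl fun j hj => ?_
      rw [hL i j, if_neg fun hij => (Finset.mem_erase.mp hj).1 hij.symm]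
      ring
    rw [hdiag, hoff, ← Finset.sum_add_distrib]
    have herase : ∑ j ∈ Finset.univ.erase i,
          (w i j * ⟪ev i t, ev i t⟫ + -(w i j * ⟪ev i t, ev j t⟫))
        = ∑ j, (w i j * ⟪ev i t, ev i t⟫ + -(w i j * ⟪ev i t, ev j t⟫)) := by
      apply Finset.sum_erase
      rw [hw_diag i]
      ring
    rw [herase]
    rw [show (∑ j ∈ G.neighborFinset i, w i j * ⟪ev i t, ev i t - ev j t⟫)
        = ∑ j, w i j * ⟪ev i t, ev i t - ev j t⟫ from
      Finset.sum_subset (Finset.subset_univ _) fun j _ hj => by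
        rw [hw_zero i j (by rwa [SimpleGraph.mem_neighborFinset] at hj)]
        ring]
    refine Finset.sum_congr rfl fun j _ => ?_
    rw [inner_sub_right]
    ring
  -- nonnegativity of the Laplacian quadratic form
  have hQnonneg : 0 ≤ ∑ i, ∑ j ∈ G.neighborFinset i, w i j * ⟪ev i t, ev i t - ev j t⟫ := by
    have hQ2 : (∑ i, ∑ j ∈ G.neighborFinset i, w i j * ⟪ev i t, ev i t - ev j t⟫)
          + ∑ i, ∑ j ∈ G.neighborFinset i, w i j * ⟪ev i t, ev i t - ev j t⟫
        = ∑ i, ∑ j ∈ G.neighborFinset i,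
            w i j * ⟪ev i t - ev j t, ev i t - ev j t⟫ := by
      nth_rewrite 2 [sum_neighbor_swap G
        (fun i j => w i j * ⟪ev i t, ev i t - ev j t⟫)]
      rw [← Finset.sum_add_distrib]
      refine Finset.sum_congr rfl fun i _ => ?_
      rw [← Finset.sum_add_distrib]
      refine Finset.sum_congr rfl fun j _ => ?_
      rw [hw_symm j i]
      simp only [inner_sub_left, inner_sub_right]
      rw [real_inner_comm (ev j t) (ev i t)]
      ring
    have hpos : 0 ≤ (∑ i, ∑ j ∈ G.neighborFinset i, w i j * ⟪ev i t, ev i t - ev j t⟫)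
          + ∑ i, ∑ j ∈ G.neighborFinset i, w i j * ⟪ev i t, ev i t - ev j t⟫ := by
      rw [hQ2]
      exact Finset.sum_nonneg fun i _ => Finset.sum_nonneg fun j _ =>
        mul_nonneg (hw_nonneg i j) real_inner_self_nonneg
    linarith
  have hRnonneg : 0 ≤ ∑ i, h i * m i * ⟪ev i t, ev i t⟫ :=
    Finset.sum_nonneg fun i _ =>
      mul_nonneg (mul_nonneg (hh_nonneg i) (hm i).le) real_inner_self_nonneg
  rw [hval] at hJder
  refine ⟨?_, ?_, ?_⟩
  · rw [hT1, hLsum, hT2]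
    exact hJder
  · rw [hT1, hLsum, hT2]
    linarith
  · exact Matrix.posSemidef_diagonal_iff.mpr fun i =>
      mul_nonneg (hh_nonneg i) (hm i).le
end
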